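/- Let p* be an entrywise positive PMF on [n1] × [n2] with θ* = log p* (entrywise), let Y ∈ ℝ^{n1×n2} have nonnegative entries, let N > 0, and set ε = Y/N − p*. Let K ⊆ ℝ^{n1×n2} be any set containing θ* such that |θ_{ij} − θ*_{ij}| ≤ 1.1 for all θ ∈ K and all (i,j), and let θ̃ be a maximizer over K of the function θ ↦ (1/N)⟨Y, θ⟩ − Σ_{i,j} e^{θ_{ij}}. Then (1/4) Σ_{i,j} p*_{ij} (θ̃_{ij} − θ*_{ij})² ≤ ⟨ε, θ̃ − θ*⟩. -/

import Mathlib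

lemma key_exp_ineq (x : ℝ) (hx : -2 ≤ x) : x ^ 2 / 4 ≤ Real.exp x - 1 - x := by
  have h1 := Real.add_one_le_exp (x / 2)
  have h2 : Real.exp x = Real.exp (x / 2) * Real.exp (x / 2) := by
    rw [← Real.exp_add]; ring_nf
  nlinarith [Real.exp_pos (x / 2), sq_nonneg (Real.exp (x / 2) - 1 - x / 2)]

theorem quadratic_basic_inequality {n₁ n₂ : ℕ}
    (p : Fin n₁ → Fin n₂ → ℝ) (hp_pos : ∀ i j, 0 < p i j)
    (hp_sum : ∑ i, ∑ j, p i j = 1)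
    (Y : Fin n₁ → Fin n₂ → ℝ) (hY : ∀ i j, 0 ≤ Y i j)
    (N : ℝ) (hN : 0 < N)
    (K : Set (Fin n₁ → Fin n₂ → ℝ))
    (hmem : (fun i j => Real.log (p i j)) ∈ K)
    (hbox : ∀ θ ∈ K, ∀ i j, |θ i j - Real.log (p i j)| ≤ 1.1)
    (θt : Fin n₁ → Fin n₂ → ℝ) (hθt : θt ∈ K)
    (hmax : ∀ θ ∈ K,
      (1 / N) * (∑ i, ∑ j, Y i j * θ i j) - ∑ i, ∑ j, Real.exp (θ i j) ≤
        (1 / N) * (∑ i, ∑ j, Y i j * θt i j) - ∑ i, ∑ j, Real.exp (θt i j)) :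
    (1 / 4) * ∑ i, ∑ j, p i j * (θt i j - Real.log (p i j)) ^ 2 ≤
      ∑ i, ∑ j, (Y i j / N - p i j) * (θt i j - Real.log (p i j)) := by
  have hmax' := hmax _ hmem
  -- Σ e^{θ*} = Σ p = 1
  have hexps : (∑ i, ∑ j, Real.exp (Real.log (p i j))) = 1 := by
    rw [← hp_sum]
    exact Finset.sum_congr rfl fun i _ => Finset.sum_congr rfl fun j _ =>
      Real.exp_log (hp_pos i j)
  rw [hexps] at hmax'
  -- pointwise key inequality
  have key : ∀ i j, p i j * (θt i j - Real.log (p i j)) ^ 2 / 4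
      + p i j * (θt i j - Real.log (p i j)) + p i j ≤ Real.exp (θt i j) := by
    intro i j
    have hb := hbox θt hθt i j
    have hx : -2 ≤ θt i j - Real.log (p i j) := by
      have := abs_le.mp hb; linarith [this.1]
    have h := key_exp_ineq _ hx
    have he : Real.exp (θt i j)
        = p i j * Real.exp (θt i j - Real.log (p i j)) := by
      rw [← Real.exp_log (hp_pos i j), ← Real.exp_add]
      congr 1
      rw [Real.log_exp]
      ring
    rw [he]
    nlinarith [hp_pos i j]
  have S1 : ∑ i, ∑ j, (p i j * (θt i j - Real.log (p i j)) ^ 2 / 4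
      + p i j * (θt i j - Real.log (p i j)) + p i j)
      ≤ ∑ i, ∑ j, Real.exp (θt i j) :=
    Finset.sum_le_sum fun i _ => Finset.sum_le_sum fun j _ => key i j
  -- split the sums
  simp only [Finset.sum_add_distrib] at S1
  rw [hp_sum] at S1
  have hdiv : ∑ i, ∑ j, p i j * (θt i j - Real.log (p i j)) ^ 2 / 4
      = (∑ i, ∑ j, p i j * (θt i j - Real.log (p i j)) ^ 2) / 4 := by
    rw [Finset.sum_div]
    exact Finset.sum_congr rfl fun i _ => (Finset.sum_div _ _ _).symm
  rw [hdiv] at S1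
  -- rewrite RHS of goal
  have hRHS : ∑ i, ∑ j, (Y i j / N - p i j) * (θt i j - Real.log (p i j))
      = (1 / N) * (∑ i, ∑ j, Y i j * θt i j)
        - (1 / N) * (∑ i, ∑ j, Y i j * Real.log (p i j))
        - ∑ i, ∑ j, p i j * (θt i j - Real.log (p i j)) := by
    rw [Finset.mul_sum, Finset.mul_sum, ← Finset.sum_sub_distrib, ← Finset.sum_sub_distrib]
    refine Finset.sum_congr rfl fun i _ => ?_
    rw [Finset.mul_sum, Finset.mul_sum, ← Finset.sum_sub_distrib, ← Finset.sum_sub_distrib]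
    refine Finset.sum_congr rfl fun j _ => ?_
    field_simp
  rw [hRHS]
  linarith [S1, hmax']
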